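/- Kid stability: if s is a kid digit string (all digits ≤ 3) in which no digit appears more than 3 times consecutively, then Z(s) is also a kid digit string in which no digit appears more than 3 times consecutively. -/

import Mathlib

/-- Run-length encoding of a digit string. -/
def rle : List ℕ → List (ℕ × ℕ)
  | [] => []
  | a :: t =>
    match rle t with
    | [] => [(a, 1)]
    | (b, n) :: r => if a = b then (b, n + 1) :: r else (a, 1) :: (b, n) :: r

/-- The "look-and-say-the-biggest" map: each maximal run of the digit `a` of length `n`
is replaced by the decimal digits of `max n a` followed by the digit `a`.
(When `n ≤ 9` this is just the two digits `max n a`, `a`.) -/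
def Z (s : List ℕ) : List ℕ :=
  ((rle s).map fun p => (Nat.digits 10 (max p.2 p.1)).reverse ++ [p.1]).flatten

/-- `r` is a run-length representation of the digit string `s`: all run lengths are
positive, consecutive base digits differ, and the expansion of `r` equals `s`. -/
def IsRLE (r : List (ℕ × ℕ)) (s : List ℕ) : Prop :=
  (∀ p ∈ r, 1 ≤ p.2) ∧ (r.map Prod.fst).Chain' (· ≠ ·) ∧
    (r.map fun p => List.replicate p.2 p.1).flatten = s

lemma rle_cons (a : ℕ) (t : List ℕ) :
    rle (a :: t) = match rle t with
    | [] => [(a, 1)]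
    | (b, n) :: r => if a = b then (b, n + 1) :: r else (a, 1) :: (b, n) :: r := rfl

lemma rle_fst_mem : ∀ {s : List ℕ} {p : ℕ × ℕ}, p ∈ rle s → p.1 ∈ s := by
  intro s
  induction s with
  | nil => simp [rle]
  | cons a t ih =>
    intro p hp
    rw [rle_cons] at hp
    rcases h : rle t with _ | ⟨⟨b, n⟩, r⟩
    · rw [h] at hp; simp at hp; simp [hp]
    · rw [h] at hp
      by_cases hab : a = b
      · simp [hab] at hp
        rcases hp with hp | hp
        · subst hp; simp [hab]
        · exact List.mem_cons_of_mem _ (ih (h ▸ List.mem_cons_of_mem _ hp))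
      · simp [hab] at hp
        rcases hp with hp | hp | hp
        · subst hp; simp
        · exact List.mem_cons_of_mem _ (ih (h ▸ (by simp [hp] : p ∈ (b,n) :: r)))
        · exact List.mem_cons_of_mem _ (ih (h ▸ List.mem_cons_of_mem _ hp))

lemma rle_chain : ∀ (s : List ℕ), ((rle s).map Prod.fst).Chain' (· ≠ ·) := by
  intro s
  induction s with
  | nil => simp [rle, List.Chain']
  | cons a t ih =>
    rw [rle_cons]
    rcases h : rle t with _ | ⟨⟨b, n⟩, r⟩
    · simp [List.Chain']
    · rw [h] at ih
      by_cases hab : a = b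
      · simpa [hab] using ih
      · simpa [hab, List.Chain'] using ih

lemma rle_pos : ∀ {s : List ℕ} {p : ℕ × ℕ}, p ∈ rle s → 1 ≤ p.2 := by
  intro s
  induction s with
  | nil => simp [rle]
  | cons a t ih =>
    intro p hp
    rw [rle_cons] at hp
    rcases h : rle t with _ | ⟨⟨b, n⟩, r⟩
    · rw [h] at hp; simp at hp; simp [hp]
    · rw [h] at hp
      by_cases hab : a = b
      · simp [hab] at hp
        rcases hp with hp | hp
        · simp [hp]
        · exact ih (h ▸ List.mem_cons_of_mem _ hp)
      · simp [hab] at hp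
        rcases hp with hp | hp | hp
        · simp [hp]
        · exact ih (h ▸ (by simp [hp] : p ∈ (b,n) :: r))
        · exact ih (h ▸ List.mem_cons_of_mem _ hp)

def blocks (L : List (ℕ × ℕ)) : List ℕ := (L.map fun p => [max p.2 p.1, p.1]).flatten

lemma key : ∀ L : List (ℕ × ℕ), (L.map Prod.fst).Chain' (· ≠ ·) →
    (∀ q ∈ rle (blocks L), q.2 ≤ 3) ∧
    (∀ a n L', L = (a, n) :: L' →
      ∃ k r, rle (blocks L) = (max n a, k) :: r ∧ k ≤ 3 ∧ (2 ≤ k → a = max n a)) := by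
  intro L
  induction L with
  | nil => intro _; refine ⟨by simp [blocks, rle], by simp⟩
  | cons p L' ih =>
    obtain ⟨a, n⟩ := p
    intro hch
    have hbl : blocks ((a, n) :: L') = max n a :: a :: blocks L' := by simp [blocks]
    rcases L' with _ | ⟨⟨a', n'⟩, L''⟩
    · -- singleton case
      by_cases hma : max n a = a
      · constructor
        · intro q hq
          rw [hbl] at hq
          simp [blocks, rle, hma] at hq
          simp [hq]
        · intro a₀ n₀ L₀ heq
          obtain ⟨h1, h2⟩ := Prod.mk.injEq .. ▸ (List.cons.injEq .. ▸ heq).1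
          subst h1; subst h2
          exact ⟨2, [], by simp [hbl, blocks, rle, hma], by omega, fun _ => hma.symm⟩
      · constructor
        · intro q hq
          rw [hbl] at hq
          simp [blocks, rle, hma] at hq
          rcases hq with hq | hq <;> simp [hq]
        · intro a₀ n₀ L₀ heq
          obtain ⟨h1, h2⟩ := Prod.mk.injEq .. ▸ (List.cons.injEq .. ▸ heq).1
          subst h1; subst h2
          exact ⟨1, [(a, 1)], by simp [hbl, blocks, rle, hma], by omega, by omega⟩
    · -- cons case
      have hne : a ≠ a' := (List.isChain_cons_cons.mp hch).1
      have hch' := (List.isChain_cons_cons.mp hch).2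
      obtain ⟨ihrun, ihhead⟩ := ih hch'
      obtain ⟨k', r', hr', hk'3, hk'2⟩ := ihhead a' n' L'' rfl
      set m' := max n' a' with hm'
      set t := blocks ((a', n') :: L'') with ht
      -- compute rle (a :: t)
      have step1 : ∃ j r₂, rle (a :: t) = (a, j) :: r₂ ∧ j ≤ 2 ∧ (j = 2 → m' = a) ∧
          (∀ q ∈ r₂, q.2 ≤ 3) ∧ (j = 1 → r₂ = (m', k') :: r') := by
        by_cases ham : a = m'
        · have hk'1 : k' ≤ 1 := by
            by_contra h
            exact hne (ham.trans (hk'2 (by omega)).symm)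
          have hk'1' : 1 ≤ k' := rle_pos (p := (m', k')) (hr' ▸ List.mem_cons_self (a := (m', k')) (l := r'))
          have hk1 : k' = 1 := by omega
          refine ⟨2, r', ?_, by omega, fun _ => ham.symm, ?_, by omega⟩
          · rw [rle_cons, hr', hk1]
            simp [ham]
          · intro q hq
            exact ihrun q (hr' ▸ List.mem_cons_of_mem _ hq)
        · refine ⟨1, (m', k') :: r', ?_, by omega, by omega, ?_, fun _ => rfl⟩
          · rw [rle_cons, hr']; simp [ham]
          · intro q hq
            rcases List.mem_cons.mp hq with h | h
            · simp [h, hk'3]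
            · exact ihrun q (hr' ▸ List.mem_cons_of_mem _ h)
      obtain ⟨j, r₂, hstep, hj2, hj2', hr₂, _⟩ := step1
      by_cases hma : max n a = a
      · have hres : rle (blocks ((a, n) :: (a', n') :: L'')) = (a, j + 1) :: r₂ := by
          rw [hbl, rle_cons, hstep]
          simp [hma]
        constructor
        · intro q hq
          rw [hres] at hq
          rcases List.mem_cons.mp hq with h | h
          · simp [h]; omega
          · exact hr₂ q h
        · intro a₀ n₀ L₀ heq
          obtain ⟨h1, h2⟩ := Prod.mk.injEq .. ▸ (List.cons.injEq .. ▸ heq).1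
          subst h1; subst h2
          exact ⟨j + 1, r₂, by rw [hres, hma], by omega, fun _ => hma.symm⟩
      · have hres : rle (blocks ((a, n) :: (a', n') :: L'')) =
            (max n a, 1) :: (a, j) :: r₂ := by
          rw [hbl, rle_cons, hstep]
          simp [hma]
        constructor
        · intro q hq
          rw [hres] at hq
          rcases List.mem_cons.mp hq with h | h
          · simp [h]
          · rcases List.mem_cons.mp h with h | h
            · simp [h]; omega
            · exact hr₂ q h
        · intro a₀ n₀ L₀ heq
          obtain ⟨h1, h2⟩ := Prod.mk.injEq .. ▸ (List.cons.injEq .. ▸ heq).1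
          subst h1; subst h2
          exact ⟨1, (a, j) :: r₂, hres, by omega, by omega⟩

lemma Z_eq_blocks (s : List ℕ) (hkid : ∀ d ∈ s, d ≤ 3) (hrun : ∀ p ∈ rle s, p.2 ≤ 3) :
    Z s = blocks (rle s) := by
  unfold Z blocks
  congr 1
  apply List.map_congr_left
  intro p hp
  have h1 : 1 ≤ max p.2 p.1 := le_trans (rle_pos hp) (le_max_left _ _)
  have h3 : max p.2 p.1 ≤ 3 := max_le (hrun p hp) (hkid _ (rle_fst_mem hp))
  have : Nat.digits 10 (max p.2 p.1) = [max p.2 p.1] := by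
    rw [Nat.digits_def' (by norm_num : 1 < 10) (by omega)]
    rw [Nat.mod_eq_of_lt (by omega), Nat.div_eq_of_lt (by omega)]
    simp
  rw [this]
  rfl

/-- Kid stability: `Z` preserves being a kid string with all run lengths ≤ 3. -/
theorem Z_kid_stable (s : List ℕ) (hkid : ∀ d ∈ s, d ≤ 3)
    (hrun : ∀ p ∈ rle s, p.2 ≤ 3) :
    (∀ d ∈ Z s, d ≤ 3) ∧ ∀ p ∈ rle (Z s), p.2 ≤ 3 := by
  rw [Z_eq_blocks s hkid hrun]
  constructor
  · intro d hd
    unfold blocks at hd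
    simp only [List.mem_flatten, List.mem_map] at hd
    obtain ⟨l, ⟨p, hp, rfl⟩, hdl⟩ := hd
    simp at hdl
    rcases hdl with h | h
    · exact h ▸ max_le (hrun p hp) (hkid _ (rle_fst_mem hp))
    · exact h ▸ hkid _ (rle_fst_mem hp)
  · exact (key (rle s) (rle_chain s)).1
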